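/- Let d ≥ 1, a > 0, let U be an odd complex polynomial (U(−w) = −U(w)), set V(z) = U(z^d) and ρ(z) = exp(−a|z|² + i·(V(z) + conj(V(z)))); this ρ satisfies conditions (I) and (II). Define τ(ℓ) = (−1)^{d−1} if ℓ ≡ d−1 (mod d) and τ(ℓ) = 1 otherwise. Then for every complex polynomial f and every polynomial g of weight ℓ, one has ⟨f' + i·V'·f, g⟩ = −τ(ℓ)·a·⟨f, z·g⟩. -/

import Mathlib

open MeasureTheory Polynomial Complex

/-- The weight-`ℓ` component (mod `d`) of a polynomial: the sum of its monomials
whose degree is congruent to `ℓ` mod `d`. -/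
noncomputable def weightComp (d ℓ : ℕ) (f : Polynomial ℂ) : Polynomial ℂ :=
  ∑ k ∈ f.support.filter (fun k => k % d = ℓ), Polynomial.monomial k (f.coeff k)

/-- A polynomial has weight `ℓ` (mod `d`) if all its monomials have degree `≡ ℓ [MOD d]`. -/
def HasWeight (d ℓ : ℕ) (f : Polynomial ℂ) : Prop :=
  ∀ k ∈ f.support, k % d = ℓ

/-- `σg(z) = Σ_{ℓ=0}^{d-1} (-ε)^{-ℓ} g_ℓ(ε z)`. -/
noncomputable def sigmaMap (d : ℕ) (ε : ℂ) (g : Polynomial ℂ) (z : ℂ) : ℂ :=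
  ∑ ℓ ∈ Finset.range d, (-ε) ^ (-(ℓ : ℤ)) * (weightComp d ℓ g).eval (ε * z)

/-- The pairing `⟨f,g⟩ = ∫_ℂ f(z) conj(σg(z)) ρ(z) dx dy`. -/
noncomputable def genPairing (d : ℕ) (ε : ℂ) (ρ : ℂ → ℂ) (f g : Polynomial ℂ) : ℂ :=
  ∫ z : ℂ, f.eval z * (starRingEnd ℂ) (sigmaMap d ε g z) * ρ z

/-- Condition (I): `ρ` is measurable and `∫_ℂ |z|^n |ρ(z)| dx dy < ∞` for all `n`. -/
def CondI (ρ : ℂ → ℂ) : Prop :=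
  Measurable ρ ∧
  ∀ n : ℕ, MeasureTheory.Integrable (fun z : ℂ => ‖z‖ ^ n * ‖ρ z‖)

/-- Condition (II): `ρ(ε z) = conj(ρ(z))` for every `ε` with `ε^d = -1`. -/
def CondII (d : ℕ) (ρ : ℂ → ℂ) : Prop :=
  ∀ ε : ℂ, ε ^ d = -1 → ∀ z : ℂ, ρ (ε * z) = (starRingEnd ℂ) (ρ z)


set_option maxHeartbeats 1000000

open Filter Set



lemma bnd0 {c : ℝ} (hc : 0 < c) (n : ℕ) {t : ℝ} (ht : 0 ≤ t) :
    t ^ (2 * n) * Real.exp (-c * t ^ 2) ≤ n.factorial / c ^ n := by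
  have h1 : (c * t ^ 2) ^ n / n.factorial ≤ Real.exp (c * t ^ 2) :=
    Real.pow_div_factorial_le_exp (x := c * t ^ 2) (by positivity) n
  have h2 : t ^ (2 * n) ≤ (n.factorial / c ^ n) * Real.exp (c * t ^ 2) := by
    rw [mul_pow] at h1
    have := (div_le_iff₀ (by positivity : (0:ℝ) < (n.factorial : ℝ))).mp h1
    calc t ^ (2*n) = (t^2)^n := by rw [← pow_mul, mul_comm]
    _ ≤ (n.factorial / c ^ n) * Real.exp (c * t ^ 2) := by
        rw [div_mul_eq_mul_div, le_div_iff₀ (by positivity)]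
        nlinarith [this]
  calc t ^ (2*n) * Real.exp (-c * t^2)
      ≤ ((n.factorial / c ^ n) * Real.exp (c * t ^ 2)) * Real.exp (-c * t^2) := by
        apply mul_le_mul_of_nonneg_right h2 (Real.exp_nonneg _)
    _ = n.factorial / c ^ n := by
        rw [mul_assoc, ← Real.exp_add]; ring_nf; simp

lemma polyBound (R : Polynomial ℂ) (z : ℂ) :
    ‖R.eval z‖ ≤ (∑ k ∈ Finset.range (R.natDegree + 1), ‖R.coeff k‖) * (1 + ‖z‖) ^ R.natDegree := by
  conv_lhs => rw [Polynomial.eval_eq_sum_range]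
  refine le_trans (norm_sum_le _ _) ?_
  rw [Finset.sum_mul]
  apply Finset.sum_le_sum
  intro k hk
  rw [norm_mul, norm_pow]
  apply mul_le_mul_of_nonneg_left _ (norm_nonneg _)
  calc ‖z‖ ^ k ≤ (1 + ‖z‖) ^ k := by
        apply pow_le_pow_left₀ (norm_nonneg _); linarith [norm_nonneg z]
    _ ≤ (1 + ‖z‖) ^ R.natDegree := by
        apply pow_le_pow_right₀ (by linarith [norm_nonneg z])
        exact Nat.lt_succ_iff.mp (Finset.mem_range.mp hk)

lemma oneAddBound {c : ℝ} (hc : 0 < c) (n : ℕ) :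
    ∃ K : ℝ, 0 ≤ K ∧ ∀ t : ℝ, 0 ≤ t → (1 + t) ^ n * Real.exp (-c * t ^ 2) ≤ K := by
  refine ⟨2 ^ n * (2 + n.factorial / c ^ n), by positivity, fun t ht => ?_⟩
  have h0 : Real.exp (-c * t ^ 2) ≤ 1 := by
    apply Real.exp_le_one_iff.mpr; nlinarith
  have h1 : (1 + t) ^ n ≤ 2 ^ n * (1 + t ^ (2 * n)) := by
    rcases le_total t 1 with h | h
    · calc (1+t)^n ≤ 2^n := by apply pow_le_pow_left₀ (by linarith) (by linarith)
      _ ≤ 2^n * (1 + t^(2*n)) := by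
          apply le_mul_of_one_le_right (by positivity)
          nlinarith [pow_nonneg ht (2*n)]
    · calc (1+t)^n ≤ (2*t)^n := by apply pow_le_pow_left₀ (by linarith) (by linarith)
      _ = 2^n * t^n := by rw [mul_pow]
      _ ≤ 2^n * (1 + t^(2*n)) := by
          have : t^n ≤ t^(2*n) := pow_le_pow_right₀ h (by omega)
          have h2 : (0:ℝ) < 2^n := by positivity
          nlinarith
  calc (1+t)^n * Real.exp (-c * t^2) ≤ (2^n * (1 + t^(2*n))) * Real.exp (-c * t^2) := by
        apply mul_le_mul_of_nonneg_right h1 (Real.exp_nonneg _)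
    _ = 2^n * (Real.exp (-c*t^2) + t^(2*n) * Real.exp (-c*t^2)) := by ring
    _ ≤ 2^n * (1 + n.factorial / c ^ n) := by
        have := bnd0 hc n ht
        apply mul_le_mul_of_nonneg_left _ (by positivity)
        linarith
    _ ≤ 2 ^ n * (2 + n.factorial / c ^ n) := by
        apply mul_le_mul_of_nonneg_left _ (by positivity); linarith


noncomputable def Efun (a : ℝ) (A : Polynomial ℂ) (z : ℂ) : ℂ :=
  Complex.exp (-(a:ℂ) * (z * (starRingEnd ℂ) z) + I * A.eval z +
    I * (A.map (starRingEnd ℂ)).eval ((starRingEnd ℂ) z))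

lemma map_conj_eval (A : Polynomial ℂ) (z : ℂ) :
    (A.map (starRingEnd ℂ)).eval ((starRingEnd ℂ) z) = (starRingEnd ℂ) (A.eval z) := by
  rw [Polynomial.eval_map, Polynomial.eval₂_at_apply]

noncomputable def Tf (a : ℝ) (A R S : Polynomial ℂ) (z : ℂ) : ℂ :=
  R.eval z * S.eval ((starRingEnd ℂ) z) * Efun a A z

noncomputable def Rx (a : ℝ) (A P : Polynomial ℂ) : Polynomial ℂ :=
  derivative P + C (-(a:ℂ)) * X * P + C I * derivative A * P

noncomputable def Sx (a : ℝ) (A Q : Polynomial ℂ) : Polynomial ℂ :=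
  derivative Q + C (-(a:ℂ)) * X * Q + C I * derivative (A.map (starRingEnd ℂ)) * Q

noncomputable def Gx (a : ℝ) (A : Polynomial ℂ) (y : ℝ) : Polynomial ℂ :=
  C (-(a:ℂ)) * ((X + C ((y:ℂ)*I)) * (X - C ((y:ℂ)*I))) + C I * A.comp (X + C ((y:ℂ)*I))
    + C I * (A.map (starRingEnd ℂ)).comp (X - C ((y:ℂ)*I))

lemma conj_xy (x y : ℝ) : (starRingEnd ℂ) ((x:ℂ) + (y:ℂ)*I) = (x:ℂ) - (y:ℂ)*I := by
  simp [map_add, map_mul, Complex.conj_ofReal, Complex.conj_I]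
  ring

lemma exp_Gx (a : ℝ) (A : Polynomial ℂ) (y x : ℝ) :
    Complex.exp ((Gx a A y).eval (x:ℂ)) = Efun a A ((x:ℂ) + (y:ℂ)*I) := by
  rw [Efun, conj_xy]
  congr 1
  simp only [Gx, eval_add, eval_mul, eval_sub, eval_X, eval_C, eval_comp]

lemma slice_x_eq (a : ℝ) (A P Q : Polynomial ℂ) (y t : ℝ) :
    ((P.comp (X + C ((y:ℂ)*I)) * Q.comp (X - C ((y:ℂ)*I))).eval (t:ℂ))
      * Complex.exp ((Gx a A y).eval (t:ℂ)) = Tf a A P Q ((t:ℂ) + (y:ℂ)*I) := by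
  rw [exp_Gx, Tf, conj_xy]
  simp only [eval_mul, eval_comp, eval_add, eval_sub, eval_X, eval_C]

lemma hasDerivAt_slice_x (a : ℝ) (A P Q : Polynomial ℂ) (y x : ℝ) :
    HasDerivAt (fun t : ℝ => ((P.comp (X + C ((y:ℂ)*I)) * Q.comp (X - C ((y:ℂ)*I))).eval (t:ℂ))
      * Complex.exp ((Gx a A y).eval (t:ℂ)))
    (Tf a A (Rx a A P) Q ((x:ℂ)+(y:ℂ)*I) + Tf a A P (Sx a A Q) ((x:ℂ)+(y:ℂ)*I)) x := by
  have h1 := ((Polynomial.hasDerivAt (P.comp (X + C ((y:ℂ)*I)) * Q.comp (X - C ((y:ℂ)*I))) (x:ℂ)).mul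
    ((Polynomial.hasDerivAt (Gx a A y) (x:ℂ)).cexp)).comp_ofReal
  convert h1 using 1
  · rfl
  rw [exp_Gx]
  simp only [Tf, Rx, Sx, Efun, conj_xy, derivative_mul, derivative_comp, derivative_add,
    derivative_sub, derivative_X, derivative_C, Gx, derivative_C_mul, eval_add, eval_mul,
    eval_sub, eval_X, eval_C, eval_comp, eval_one, eval_zero, derivative_one, map_conj_eval]
  ring
noncomputable def Ry (a : ℝ) (A P : Polynomial ℂ) : Polynomial ℂ :=
  C I * derivative P + C ((a:ℂ)*I) * X * P + C (-1:ℂ) * derivative A * P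

noncomputable def Sy (a : ℝ) (A Q : Polynomial ℂ) : Polynomial ℂ :=
  C (-I) * derivative Q + C (-(a:ℂ)*I) * X * Q + derivative (A.map (starRingEnd ℂ)) * Q

noncomputable def Gy (a : ℝ) (A : Polynomial ℂ) (x : ℝ) : Polynomial ℂ :=
  C (-(a:ℂ)) * ((C I * X + C (x:ℂ)) * (C (-I) * X + C (x:ℂ)))
    + C I * A.comp (C I * X + C (x:ℂ))
    + C I * (A.map (starRingEnd ℂ)).comp (C (-I) * X + C (x:ℂ))

lemma exp_Gy (a : ℝ) (A : Polynomial ℂ) (x t : ℝ) :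
    Complex.exp ((Gy a A x).eval (t:ℂ)) = Efun a A ((x:ℂ) + (t:ℂ)*I) := by
  rw [Efun, conj_xy]
  congr 1
  simp only [Gy, eval_add, eval_mul, eval_sub, eval_X, eval_C, eval_comp, eval_neg]
  ring

lemma slice_y_eq (a : ℝ) (A P Q : Polynomial ℂ) (x t : ℝ) :
    ((P.comp (C I * X + C (x:ℂ)) * Q.comp (C (-I) * X + C (x:ℂ))).eval (t:ℂ))
      * Complex.exp ((Gy a A x).eval (t:ℂ)) = Tf a A P Q ((x:ℂ) + (t:ℂ)*I) := by
  rw [exp_Gy, Tf, conj_xy]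
  simp only [eval_mul, eval_comp, eval_add, eval_X, eval_C]
  ring_nf

lemma hasDerivAt_slice_y (a : ℝ) (A P Q : Polynomial ℂ) (x t : ℝ) :
    HasDerivAt (fun s : ℝ => ((P.comp (C I * X + C (x:ℂ)) * Q.comp (C (-I) * X + C (x:ℂ))).eval (s:ℂ))
      * Complex.exp ((Gy a A x).eval (s:ℂ)))
    (Tf a A (Ry a A P) Q ((x:ℂ)+(t:ℂ)*I) + Tf a A P (Sy a A Q) ((x:ℂ)+(t:ℂ)*I)) t := by
  have h1 := ((Polynomial.hasDerivAt (P.comp (C I * X + C (x:ℂ)) * Q.comp (C (-I) * X + C (x:ℂ))) (t:ℂ)).mul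
    ((Polynomial.hasDerivAt (Gy a A x) (t:ℂ)).cexp)).comp_ofReal
  convert h1 using 1
  · rfl
  rw [exp_Gy]
  simp only [Tf, Ry, Sy, Efun, conj_xy, derivative_mul, derivative_comp, derivative_add,
    derivative_sub, derivative_X, derivative_C, Gy, eval_add, eval_mul,
    eval_sub, eval_X, eval_C, eval_comp, eval_one, eval_zero, eval_neg, derivative_one,
    map_conj_eval]
  ring_nf
  simp only [Complex.I_sq]
  ring

lemma continuous_Efun (a : ℝ) (A : Polynomial ℂ) : Continuous (Efun a A) := by
  unfold Efun
  apply Complex.continuous_exp.comp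
  apply Continuous.add
  apply Continuous.add
  · exact (continuous_const.mul (continuous_id.mul continuous_conj))
  · exact continuous_const.mul (A.continuous.comp continuous_id)
  · exact continuous_const.mul ((A.map (starRingEnd ℂ)).continuous.comp continuous_conj)

lemma norm_Efun (a : ℝ) (A : Polynomial ℂ) (z : ℂ) :
    ‖Efun a A z‖ = Real.exp (-a * ‖z‖ ^ 2) := by
  rw [Efun, map_conj_eval, Complex.norm_exp]
  congr 1
  have h1 : z * (starRingEnd ℂ) z = ((‖z‖ ^ 2 : ℝ) : ℂ) := by
    rw [Complex.mul_conj]; norm_cast; exact (Complex.sq_norm z).symm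
  rw [h1]
  simp only [Complex.add_re, Complex.mul_re, Complex.I_re, Complex.I_im, Complex.conj_re,
    Complex.conj_im, Complex.neg_re, Complex.neg_im, Complex.ofReal_re, Complex.ofReal_im]
  ring

lemma integrable_gauss2 {c : ℝ} (hc : 0 < c) :
    Integrable (fun z : ℂ => Real.exp (-c * ‖z‖ ^ 2)) := by
  rw [← MeasurePreserving.integrable_comp_emb (Complex.volume_preserving_equiv_real_prod.symm)
    (MeasurableEquiv.measurableEmbedding _)]
  have : ((fun z : ℂ => Real.exp (-c * ‖z‖ ^ 2)) ∘ Complex.measurableEquivRealProd.symm)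
      = fun p : ℝ × ℝ => Real.exp (-c * p.1 ^ 2) * Real.exp (-c * p.2 ^ 2) := by
    funext p
    simp only [Function.comp_apply, Complex.measurableEquivRealProd_symm_apply, ← Real.exp_add,
      Complex.sq_norm, Complex.normSq_mk]
    congr 1; ring
  rw [this, MeasureTheory.Measure.volume_eq_prod]
  exact (integrable_exp_neg_mul_sq hc).mul_prod (integrable_exp_neg_mul_sq hc)

lemma Tf_bound {a : ℝ} (ha : 0 < a) (A R S : Polynomial ℂ) :
    ∃ C : ℝ, 0 ≤ C ∧ ∀ z : ℂ, ‖Tf a A R S z‖ ≤ C * Real.exp (-(a/2) * ‖z‖ ^ 2) := by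
  obtain ⟨K, hK0, hK⟩ := oneAddBound (half_pos ha) (R.natDegree + S.natDegree)
  set CR := ∑ k ∈ Finset.range (R.natDegree + 1), ‖R.coeff k‖ with hCR
  set CS := ∑ k ∈ Finset.range (S.natDegree + 1), ‖S.coeff k‖ with hCS
  have hCR0 : 0 ≤ CR := Finset.sum_nonneg fun _ _ => norm_nonneg _
  have hCS0 : 0 ≤ CS := Finset.sum_nonneg fun _ _ => norm_nonneg _
  refine ⟨CR * CS * K, by positivity, fun z => ?_⟩
  have hz : (0:ℝ) ≤ ‖z‖ := norm_nonneg z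
  have e1 : ‖R.eval z‖ ≤ CR * (1 + ‖z‖) ^ R.natDegree := polyBound R z
  have e2 : ‖S.eval ((starRingEnd ℂ) z)‖ ≤ CS * (1 + ‖z‖) ^ S.natDegree := by
    have := polyBound S ((starRingEnd ℂ) z)
    simpa [Complex.norm_conj] using this
  have esplit : Real.exp (-a * ‖z‖ ^ 2)
      = Real.exp (-(a/2) * ‖z‖ ^ 2) * Real.exp (-(a/2) * ‖z‖ ^ 2) := by
    rw [← Real.exp_add]; ring_nf
  calc ‖Tf a A R S z‖
      = ‖R.eval z‖ * ‖S.eval ((starRingEnd ℂ) z)‖ * Real.exp (-a * ‖z‖ ^ 2) := by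
        rw [Tf, norm_mul, norm_mul, norm_Efun]
    _ ≤ (CR * (1 + ‖z‖) ^ R.natDegree) * (CS * (1 + ‖z‖) ^ S.natDegree)
          * Real.exp (-a * ‖z‖ ^ 2) := by
        apply mul_le_mul_of_nonneg_right _ (Real.exp_nonneg _)
        exact mul_le_mul e1 e2 (norm_nonneg _) (by positivity)
    _ = (CR * CS) * ((1 + ‖z‖) ^ (R.natDegree + S.natDegree)
          * Real.exp (-(a/2) * ‖z‖ ^ 2)) * Real.exp (-(a/2) * ‖z‖ ^ 2) := by
        rw [esplit, pow_add]; ring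
    _ ≤ (CR * CS) * K * Real.exp (-(a/2) * ‖z‖ ^ 2) := by
        apply mul_le_mul_of_nonneg_right _ (Real.exp_nonneg _)
        apply mul_le_mul_of_nonneg_left (hK _ hz) (by positivity)

lemma continuous_Tf (a : ℝ) (A R S : Polynomial ℂ) : Continuous (Tf a A R S) := by
  unfold Tf
  exact ((R.continuous.comp continuous_id).mul
    ((S.continuous).comp continuous_conj)).mul (continuous_Efun a A)

lemma integrable_Tf {a : ℝ} (ha : 0 < a) (A R S : Polynomial ℂ) :
    Integrable (Tf a A R S) := by
  obtain ⟨C, hC0, hC⟩ := Tf_bound ha A R S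
  apply Integrable.mono' ((integrable_gauss2 (half_pos ha)).const_mul C)
    (continuous_Tf a A R S).aestronglyMeasurable
  filter_upwards with z using hC z

lemma exp_sq_tendsto_top {c : ℝ} (hc : 0 < c) :
    Tendsto (fun t : ℝ => Real.exp (-c * t ^ 2)) atTop (nhds 0) :=
  Real.tendsto_exp_atBot.comp
    ((tendsto_pow_atTop two_ne_zero).const_mul_atTop_of_neg (neg_lt_zero.2 hc))

lemma exp_sq_tendsto_bot {c : ℝ} (hc : 0 < c) :
    Tendsto (fun t : ℝ => Real.exp (-c * t ^ 2)) atBot (nhds 0) := by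
  have h := (exp_sq_tendsto_top hc).comp tendsto_abs_atBot_atTop
  convert h using 2 with t
  simp [Function.comp, sq_abs]

lemma abs_xy (x y : ℝ) : ‖(x:ℂ) + (y:ℂ)*I‖ ^ 2 = x ^ 2 + y ^ 2 := by
  rw [Complex.sq_norm, Complex.normSq_add_mul_I]

lemma slice_norm_bound {a C : ℝ} (ha : 0 < a) (hC0 : 0 ≤ C) (A R S : Polynomial ℂ)
    (hC : ∀ z : ℂ, ‖Tf a A R S z‖ ≤ C * Real.exp (-(a/2) * ‖z‖ ^ 2)) (y t : ℝ) :
    ‖Tf a A R S ((t:ℂ) + (y:ℂ)*I)‖ ≤ C * Real.exp (-(a/2) * t ^ 2) := by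
  refine le_trans (hC _) ?_
  apply mul_le_mul_of_nonneg_left _ hC0
  apply Real.exp_le_exp.mpr
  rw [abs_xy]
  nlinarith [sq_nonneg y, ha.le]

lemma slice_integrable {a : ℝ} (ha : 0 < a) (A R S : Polynomial ℂ) (y : ℝ) :
    Integrable (fun t : ℝ => Tf a A R S ((t:ℂ) + (y:ℂ)*I)) := by
  obtain ⟨C, hC0, hC⟩ := Tf_bound ha A R S
  apply Integrable.mono' ((integrable_exp_neg_mul_sq (half_pos ha)).const_mul C)
  · apply Continuous.aestronglyMeasurable
    exact (continuous_Tf a A R S).comp (by continuity)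
  · filter_upwards with t using slice_norm_bound ha hC0 A R S hC y t

lemma slice_tendsto_top {a : ℝ} (ha : 0 < a) (A R S : Polynomial ℂ) (y : ℝ) :
    Tendsto (fun t : ℝ => Tf a A R S ((t:ℂ) + (y:ℂ)*I)) atTop (nhds 0) := by
  obtain ⟨C, hC0, hC⟩ := Tf_bound ha A R S
  apply squeeze_zero_norm (fun t => slice_norm_bound ha hC0 A R S hC y t)
  simpa using (exp_sq_tendsto_top (half_pos ha)).const_mul C

lemma slice_tendsto_bot {a : ℝ} (ha : 0 < a) (A R S : Polynomial ℂ) (y : ℝ) :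
    Tendsto (fun t : ℝ => Tf a A R S ((t:ℂ) + (y:ℂ)*I)) atBot (nhds 0) := by
  obtain ⟨C, hC0, hC⟩ := Tf_bound ha A R S
  apply squeeze_zero_norm (fun t => slice_norm_bound ha hC0 A R S hC y t)
  simpa using (exp_sq_tendsto_bot (half_pos ha)).const_mul C

lemma slice_norm_bound2 {a C : ℝ} (ha : 0 < a) (hC0 : 0 ≤ C) (A R S : Polynomial ℂ)
    (hC : ∀ z : ℂ, ‖Tf a A R S z‖ ≤ C * Real.exp (-(a/2) * ‖z‖ ^ 2)) (x t : ℝ) :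
    ‖Tf a A R S ((x:ℂ) + (t:ℂ)*I)‖ ≤ C * Real.exp (-(a/2) * t ^ 2) := by
  refine le_trans (hC _) ?_
  apply mul_le_mul_of_nonneg_left _ hC0
  apply Real.exp_le_exp.mpr
  rw [abs_xy]
  nlinarith [sq_nonneg x, ha.le]

lemma slice_integrable2 {a : ℝ} (ha : 0 < a) (A R S : Polynomial ℂ) (x : ℝ) :
    Integrable (fun t : ℝ => Tf a A R S ((x:ℂ) + (t:ℂ)*I)) := by
  obtain ⟨C, hC0, hC⟩ := Tf_bound ha A R S
  apply Integrable.mono' ((integrable_exp_neg_mul_sq (half_pos ha)).const_mul C)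
  · apply Continuous.aestronglyMeasurable
    exact (continuous_Tf a A R S).comp (by continuity)
  · filter_upwards with t using slice_norm_bound2 ha hC0 A R S hC x t

lemma slice_tendsto2_top {a : ℝ} (ha : 0 < a) (A R S : Polynomial ℂ) (x : ℝ) :
    Tendsto (fun t : ℝ => Tf a A R S ((x:ℂ) + (t:ℂ)*I)) atTop (nhds 0) := by
  obtain ⟨C, hC0, hC⟩ := Tf_bound ha A R S
  apply squeeze_zero_norm (fun t => slice_norm_bound2 ha hC0 A R S hC x t)
  simpa using (exp_sq_tendsto_top (half_pos ha)).const_mul C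

lemma slice_tendsto2_bot {a : ℝ} (ha : 0 < a) (A R S : Polynomial ℂ) (x : ℝ) :
    Tendsto (fun t : ℝ => Tf a A R S ((x:ℂ) + (t:ℂ)*I)) atBot (nhds 0) := by
  obtain ⟨C, hC0, hC⟩ := Tf_bound ha A R S
  apply squeeze_zero_norm (fun t => slice_norm_bound2 ha hC0 A R S hC x t)
  simpa using (exp_sq_tendsto_bot (half_pos ha)).const_mul C

lemma integral_deriv_zero (h h' : ℝ → ℂ) (hd : ∀ x, HasDerivAt h (h' x) x)
    (hi : Integrable h') (htop : Tendsto h atTop (nhds 0))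
    (hbot : Tendsto h atBot (nhds 0)) : ∫ x, h' x = 0 := by
  have h1 : ∫ x in Iic (0:ℝ), h' x = h 0 - 0 :=
    MeasureTheory.integral_Iic_of_hasDerivAt_of_tendsto' (fun x _ => hd x)
      hi.integrableOn hbot
  have h2 : ∫ x in Ioi (0:ℝ), h' x = 0 - h 0 :=
    MeasureTheory.integral_Ioi_of_hasDerivAt_of_tendsto' (fun x _ => hd x)
      hi.integrableOn htop
  rw [← intervalIntegral.integral_Iic_add_Ioi hi.integrableOn hi.integrableOn, h1, h2]
  ring

lemma integral_slice_x_zero {a : ℝ} (ha : 0 < a) (A P Q : Polynomial ℂ) (y : ℝ) :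
    ∫ t : ℝ, (Tf a A (Rx a A P) Q ((t:ℂ)+(y:ℂ)*I) + Tf a A P (Sx a A Q) ((t:ℂ)+(y:ℂ)*I)) = 0 := by
  apply integral_deriv_zero (fun t : ℝ => ((P.comp (X + C ((y:ℂ)*I))
      * Q.comp (X - C ((y:ℂ)*I))).eval (t:ℂ)) * Complex.exp ((Gx a A y).eval (t:ℂ)))
  · intro t; exact hasDerivAt_slice_x a A P Q y t
  · exact (slice_integrable ha A _ Q y).add (slice_integrable ha A P _ y)
  · have he : (fun t : ℝ => ((P.comp (X + C ((y:ℂ)*I))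
        * Q.comp (X - C ((y:ℂ)*I))).eval (t:ℂ)) * Complex.exp ((Gx a A y).eval (t:ℂ)))
        = fun t : ℝ => Tf a A P Q ((t:ℂ)+(y:ℂ)*I) := funext fun t => slice_x_eq a A P Q y t
    rw [he]; exact slice_tendsto_top ha A P Q y
  · have he : (fun t : ℝ => ((P.comp (X + C ((y:ℂ)*I))
        * Q.comp (X - C ((y:ℂ)*I))).eval (t:ℂ)) * Complex.exp ((Gx a A y).eval (t:ℂ)))
        = fun t : ℝ => Tf a A P Q ((t:ℂ)+(y:ℂ)*I) := funext fun t => slice_x_eq a A P Q y t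
    rw [he]; exact slice_tendsto_bot ha A P Q y

lemma integral_slice_y_zero {a : ℝ} (ha : 0 < a) (A P Q : Polynomial ℂ) (x : ℝ) :
    ∫ t : ℝ, (Tf a A (Ry a A P) Q ((x:ℂ)+(t:ℂ)*I) + Tf a A P (Sy a A Q) ((x:ℂ)+(t:ℂ)*I)) = 0 := by
  apply integral_deriv_zero (fun s : ℝ => ((P.comp (C I * X + C (x:ℂ))
      * Q.comp (C (-I) * X + C (x:ℂ))).eval (s:ℂ)) * Complex.exp ((Gy a A x).eval (s:ℂ)))
  · intro t; exact hasDerivAt_slice_y a A P Q x t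
  · exact ((slice_integrable2 ha A _ Q x).add (slice_integrable2 ha A P _ x))
  · have he : (fun s : ℝ => ((P.comp (C I * X + C (x:ℂ))
        * Q.comp (C (-I) * X + C (x:ℂ))).eval (s:ℂ)) * Complex.exp ((Gy a A x).eval (s:ℂ)))
        = fun t : ℝ => Tf a A P Q ((x:ℂ)+(t:ℂ)*I) := funext fun t => slice_y_eq a A P Q x t
    rw [he]; exact slice_tendsto2_top ha A P Q x
  · have he : (fun s : ℝ => ((P.comp (C I * X + C (x:ℂ))
        * Q.comp (C (-I) * X + C (x:ℂ))).eval (s:ℂ)) * Complex.exp ((Gy a A x).eval (s:ℂ)))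
        = fun t : ℝ => Tf a A P Q ((x:ℂ)+(t:ℂ)*I) := funext fun t => slice_y_eq a A P Q x t
    rw [he]; exact slice_tendsto2_bot ha A P Q x

lemma integral_complex_eq (D : ℂ → ℂ) :
    ∫ z : ℂ, D z = ∫ p : ℝ × ℝ, D ((p.1 : ℂ) + (p.2 : ℂ) * I) := by
  rw [← MeasurePreserving.integral_comp (Complex.volume_preserving_equiv_real_prod.symm)
    (MeasurableEquiv.measurableEmbedding _) D]
  congr 1
  funext p
  simp [Complex.measurableEquivRealProd_symm_apply, Complex.mk_eq_add_mul_I]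

lemma integrable_complex_prod {D : ℂ → ℂ} (hD : Integrable D) :
    Integrable (fun p : ℝ × ℝ => D ((p.1 : ℂ) + (p.2 : ℂ) * I)) := by
  have h := (MeasurePreserving.integrable_comp_emb
    (Complex.volume_preserving_equiv_real_prod.symm)
    (MeasurableEquiv.measurableEmbedding _)).2 hD
  have he : (D ∘ ⇑Complex.measurableEquivRealProd.symm)
      = fun p : ℝ × ℝ => D ((p.1 : ℂ) + (p.2 : ℂ) * I) := by
    funext p
    simp [Complex.measurableEquivRealProd_symm_apply, Complex.mk_eq_add_mul_I]
  rwa [he] at h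

lemma integral_Dx_zero {a : ℝ} (ha : 0 < a) (A P Q : Polynomial ℂ) :
    ∫ z : ℂ, (Tf a A (Rx a A P) Q z + Tf a A P (Sx a A Q) z) = 0 := by
  have hint : Integrable (fun z : ℂ => Tf a A (Rx a A P) Q z + Tf a A P (Sx a A Q) z) :=
    (integrable_Tf ha A _ Q).add (integrable_Tf ha A P _)
  rw [integral_complex_eq]
  have h2 := integrable_complex_prod hint
  rw [MeasureTheory.Measure.volume_eq_prod] at h2 ⊢
  rw [MeasureTheory.integral_prod_symm _ h2]
  simp only [integral_slice_x_zero ha A P Q, MeasureTheory.integral_zero]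

lemma integral_Dy_zero {a : ℝ} (ha : 0 < a) (A P Q : Polynomial ℂ) :
    ∫ z : ℂ, (Tf a A (Ry a A P) Q z + Tf a A P (Sy a A Q) z) = 0 := by
  have hint : Integrable (fun z : ℂ => Tf a A (Ry a A P) Q z + Tf a A P (Sy a A Q) z) :=
    (integrable_Tf ha A _ Q).add (integrable_Tf ha A P _)
  rw [integral_complex_eq]
  have h2 := integrable_complex_prod hint
  rw [MeasureTheory.Measure.volume_eq_prod] at h2 ⊢
  rw [MeasureTheory.integral_prod _ h2]
  simp only [integral_slice_y_zero ha A P Q, MeasureTheory.integral_zero]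

lemma key_integration {a : ℝ} (ha : 0 < a) (A P Q : Polynomial ℂ) :
    ∫ z : ℂ, Tf a A (derivative P + C I * derivative A * P) Q z
      = (a:ℂ) * ∫ z : ℂ, Tf a A P (X * Q) z := by
  have h1 := integral_Dx_zero ha A P Q
  have h2 := integral_Dy_zero ha A P Q
  have i1 : Integrable (fun z => Tf a A (Rx a A P) Q z + Tf a A P (Sx a A Q) z) :=
    (integrable_Tf ha A _ Q).add (integrable_Tf ha A P _)
  have i2 : Integrable (fun z => Tf a A (Ry a A P) Q z + Tf a A P (Sy a A Q) z) :=
    (integrable_Tf ha A _ Q).add (integrable_Tf ha A P _)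
  have iG1 : Integrable (Tf a A (derivative P + C I * derivative A * P) Q) :=
    integrable_Tf ha A _ Q
  have iG2 : Integrable (Tf a A P (X * Q)) := integrable_Tf ha A P _
  have hpt : (fun z : ℂ => (Tf a A (Rx a A P) Q z + Tf a A P (Sx a A Q) z)
      - I * (Tf a A (Ry a A P) Q z + Tf a A P (Sy a A Q) z))
      = fun z : ℂ => (2:ℂ) * Tf a A (derivative P + C I * derivative A * P) Q z
        - (2*(a:ℂ)) * Tf a A P (X * Q) z := by
    funext z
    simp only [Tf, Rx, Sx, Ry, Sy, eval_add, eval_mul, eval_C, eval_X, eval_neg, eval_one]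
    ring_nf
    simp only [Complex.I_sq]
    ring
  have e0 : ∫ z : ℂ, ((Tf a A (Rx a A P) Q z + Tf a A P (Sx a A Q) z)
      - I * (Tf a A (Ry a A P) Q z + Tf a A P (Sy a A Q) z)) = 0 := by
    rw [MeasureTheory.integral_sub i1 (i2.const_mul I), MeasureTheory.integral_const_mul, h1, h2]
    ring
  rw [hpt] at e0
  rw [MeasureTheory.integral_sub (iG1.const_mul 2) (iG2.const_mul _),
    MeasureTheory.integral_const_mul, MeasureTheory.integral_const_mul] at e0
  linear_combination e0 / 2

lemma integrable_abs_pow {a : ℝ} (ha : 0 < a) (n : ℕ) :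
    Integrable (fun z : ℂ => ‖z‖ ^ n * Real.exp (-a * ‖z‖ ^ 2)) := by
  obtain ⟨K, hK0, hK⟩ := oneAddBound (half_pos ha) n
  apply Integrable.mono' ((integrable_gauss2 (half_pos ha)).const_mul K)
  · apply Continuous.aestronglyMeasurable
    apply Continuous.mul
    · exact (continuous_norm.pow n)
    · exact Real.continuous_exp.comp (continuous_const.mul (continuous_norm.pow 2))
  · filter_upwards with z
    have hz : (0:ℝ) ≤ ‖z‖ := norm_nonneg z
    have esplit : Real.exp (-a * ‖z‖ ^ 2)
        = Real.exp (-(a/2) * ‖z‖ ^ 2) * Real.exp (-(a/2) * ‖z‖ ^ 2) := by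
      rw [← Real.exp_add]; ring_nf
    rw [Real.norm_eq_abs, _root_.abs_of_nonneg (by positivity), esplit, ← mul_assoc]
    apply mul_le_mul_of_nonneg_right _ (Real.exp_nonneg _)
    calc ‖z‖ ^ n * Real.exp (-(a/2) * ‖z‖ ^ 2)
        ≤ (1 + ‖z‖) ^ n * Real.exp (-(a/2) * ‖z‖ ^ 2) := by
          apply mul_le_mul_of_nonneg_right _ (Real.exp_nonneg _)
          apply pow_le_pow_left₀ hz (by linarith)
      _ ≤ K := hK _ hz


lemma weightComp_of_hasWeight {d ℓ : ℕ} (g : Polynomial ℂ) (hg : HasWeight d ℓ g) :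
    weightComp d ℓ g = g := by
  unfold weightComp
  rw [Finset.filter_true_of_mem hg]
  conv_rhs => rw [← g.sum_monomial_eq]
  rw [Polynomial.sum_def]

lemma weightComp_ne {d ℓ ℓ' : ℕ} (g : Polynomial ℂ) (hg : HasWeight d ℓ g) (h : ℓ' ≠ ℓ) :
    weightComp d ℓ' g = 0 := by
  unfold weightComp
  rw [Finset.filter_false_of_mem, Finset.sum_empty]
  intro k hk hcon
  exact h (hcon ▸ (hg k hk).symm ▸ rfl)

lemma sigmaMap_of_hasWeight {d ℓ : ℕ} (ε : ℂ) (g : Polynomial ℂ) (hℓ : ℓ < d)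
    (hg : HasWeight d ℓ g) (z : ℂ) :
    sigmaMap d ε g z = (-ε) ^ (-(ℓ:ℤ)) * g.eval (ε * z) := by
  unfold sigmaMap
  rw [Finset.sum_eq_single ℓ]
  · rw [weightComp_of_hasWeight g hg]
  · intro b _ hbne
    rw [weightComp_ne g hg hbne, Polynomial.eval_zero, mul_zero]
  · intro h; exact absurd (Finset.mem_range.mpr hℓ) h

lemma hasWeight_X_mul {d ℓ : ℕ} (g : Polynomial ℂ) (hℓ : ℓ < d) (hg : HasWeight d ℓ g) :
    HasWeight d ((ℓ+1) % d) (X * g) := by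
  intro k hk
  rcases k with _ | m
  · rw [Polynomial.mem_support_iff] at hk
    simp [Polynomial.coeff_X_mul_zero] at hk
  · have hc : g.coeff m ≠ 0 := by
      rw [Polynomial.mem_support_iff, Polynomial.coeff_X_mul] at hk
      exact hk
    have hm := hg m (Polynomial.mem_support_iff.mpr hc)
    have hmod : m % d = ℓ % d := by rw [hm, Nat.mod_eq_of_lt hℓ]
    exact Nat.ModEq.add_right 1 hmod

lemma scalar_id {d : ℕ} (hd : 1 ≤ d) {ε : ℂ} (hε : ε ^ d = -1) {ℓ : ℕ} (hℓ : ℓ < d) :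
    (-ε) ^ (-(ℓ:ℤ)) = -((if ℓ % d = d - 1 then ((-1:ℂ)) ^ (d-1) else 1)
      * ((-ε) ^ (-((((ℓ+1) % d : ℕ)) : ℤ)) * ε)) := by
  have hεne : ε ≠ 0 := by
    intro h; rw [h, zero_pow (by omega : d ≠ 0)] at hε
    exact absurd hε.symm (by norm_num)
  have hu : (-ε) ≠ 0 := neg_ne_zero.mpr hεne
  rcases Nat.lt_or_ge (ℓ+1) d with hlt | hge
  · have h1 : ℓ % d = ℓ := Nat.mod_eq_of_lt hℓ
    have h2 : ¬ (ℓ % d = d - 1) := by omega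
    rw [if_neg h2, Nat.mod_eq_of_lt hlt]
    have he : (-ε) ^ (-(ℓ:ℤ)) = (-ε) ^ (-((ℓ:ℤ)+1)) * (-ε) := by
      rw [← zpow_add_one₀ hu]; ring_nf
    rw [he]
    push_cast
    ring
  · have hld : ℓ = d - 1 := by omega
    have h1 : ℓ % d = d - 1 := by rw [Nat.mod_eq_of_lt hℓ, hld]
    have h2 : (ℓ+1) % d = 0 := by
      have : ℓ + 1 = d := by omega
      rw [this, Nat.mod_self]
    rw [if_pos h1, h2]
    simp only [Nat.cast_zero, neg_zero, zpow_zero, one_mul]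
    have hud : (-ε) ^ (d:ℕ) = (-1) ^ (d+1) := by
      rw [neg_pow, hε]; ring
    have he : (-ε) ^ (-(ℓ:ℤ)) = (-ε) * ((-ε) ^ (d:ℕ))⁻¹ := by
      have h3 : -(ℓ:ℤ) = 1 + (-(d:ℤ)) := by omega
      rw [h3, zpow_add₀ hu, zpow_one, zpow_neg, zpow_natCast]
    rw [he, hud]
    have hinv : (((-1:ℂ)) ^ (d+1))⁻¹ = ((-1:ℂ)) ^ (d+1) := by
      rw [← inv_pow, inv_neg_one]
    rw [hinv]
    have h4 : ((-1:ℂ)) ^ (d+1) = ((-1:ℂ)) ^ (d-1) := by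
      have h5 : d + 1 = (d-1) + 2 := by omega
      rw [h5, pow_add]; norm_num
    rw [h4]; ring


theorem stmt_11 (d : ℕ) (hd : 1 ≤ d) (a : ℝ) (ha : 0 < a)
    (U : Polynomial ℂ) (hU : ∀ w : ℂ, U.eval (-w) = -U.eval w)
    (V : Polynomial ℂ) (hV : V = U.comp (X ^ d))
    (ρ : ℂ → ℂ)
    (hρ : ρ = fun z : ℂ => Complex.exp (-(a : ℂ) * (‖z‖ : ℂ) ^ 2 +
      Complex.I * (V.eval z + (starRingEnd ℂ) (V.eval z))))
    (τ : ℕ → ℝ)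
    (hτ : ∀ ℓ : ℕ, τ ℓ = if ℓ % d = d - 1 then (-1 : ℝ) ^ (d - 1) else 1)
    (ε : ℂ) (hε : ε ^ d = -1) :
    (CondI ρ ∧ CondII d ρ) ∧
    ∀ (f g : Polynomial ℂ) (ℓ : ℕ), ℓ < d → HasWeight d ℓ g →
      genPairing d ε ρ (derivative f + C Complex.I * derivative V * f) g =
        -(τ ℓ : ℂ) * (a : ℂ) * genPairing d ε ρ f (X * g) := by
  have hrhoE : ρ = Efun a V := by
    rw [hρ]
    funext z
    unfold Efun
    rw [map_conj_eval]
    congr 1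
    have h1 : ((‖z‖ : ℂ)) ^ 2 = z * (starRingEnd ℂ) z := by
      rw [Complex.mul_conj]; norm_cast; exact Complex.sq_norm z
    rw [h1]; ring
  have hcont : Continuous ρ := by rw [hrhoE]; exact continuous_Efun a V
  refine ⟨⟨⟨hcont.measurable, fun n => ?_⟩, ?_⟩, ?_⟩
  · have he : (fun z : ℂ => ‖z‖ ^ n * ‖ρ z‖)
        = fun z : ℂ => ‖z‖ ^ n * Real.exp (-a * ‖z‖ ^ 2) := by
      funext z
      rw [hrhoE, norm_Efun]
    rw [he]
    exact integrable_abs_pow ha n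
  · -- CondII
    intro ε' hε' z
    have habs : ‖ε'‖ = 1 := by
      have h1 : ‖ε'‖ ^ d = 1 := by
        rw [← norm_pow, hε']; simp
      have h0 : (0:ℝ) ≤ ‖ε'‖ := norm_nonneg ε'
      rcases lt_trichotomy ‖ε'‖ 1 with h | h | h
      · have := pow_lt_one₀ h0 h (by omega : d ≠ 0); rw [h1] at this; linarith
      · exact h
      · have := one_lt_pow₀ h (by omega : d ≠ 0); rw [h1] at this; linarith
    have hVev : ∀ w : ℂ, V.eval w = U.eval (w ^ d) := by
      intro w; rw [hV, Polynomial.eval_comp, Polynomial.eval_pow, Polynomial.eval_X]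
    have hVneg : V.eval (ε' * z) = -V.eval z := by
      rw [hVev, hVev, mul_pow, hε', neg_one_mul]
      exact hU _
    have habs2 : ‖ε' * z‖ = ‖z‖ := by rw [norm_mul, habs, one_mul]
    rw [hρ]
    simp only []
    rw [← Complex.exp_conj]
    congr 1
    rw [habs2, hVneg]
    simp only [map_add, map_mul, map_neg, Complex.conj_conj, Complex.conj_ofReal,
      Complex.conj_I, map_pow]
    ring
  · intro f g ℓ hℓ hg
    have hQg : ∀ z : ℂ, ((g.map (starRingEnd ℂ)).comp (C ((starRingEnd ℂ) ε) * X)).eval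
          ((starRingEnd ℂ) z) = (starRingEnd ℂ) (g.eval (ε * z)) := by
      intro z
      rw [Polynomial.eval_comp, Polynomial.eval_mul, Polynomial.eval_C, Polynomial.eval_X,
        ← map_mul, Polynomial.eval_map, Polynomial.eval₂_at_apply]
    set Qg := (g.map (starRingEnd ℂ)).comp (C ((starRingEnd ℂ) ε) * X) with hQgdef
    have hm : (ℓ+1) % d < d := Nat.mod_lt _ (by omega)
    have hgX := hasWeight_X_mul g hℓ hg
    unfold genPairing
    have hL : (fun z : ℂ => (derivative f + C Complex.I * derivative V * f).eval z
          * (starRingEnd ℂ) (sigmaMap d ε g z) * ρ z)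
        = fun z : ℂ => (starRingEnd ℂ) ((-ε) ^ (-(ℓ:ℤ)))
          * Tf a V (derivative f + C Complex.I * derivative V * f) Qg z := by
      funext z
      rw [sigmaMap_of_hasWeight ε g hℓ hg z, map_mul, hrhoE, Tf, hQg z]
      ring
    have hR : (fun z : ℂ => f.eval z * (starRingEnd ℂ) (sigmaMap d ε (X*g) z) * ρ z)
        = fun z : ℂ => (starRingEnd ℂ) ((-ε) ^ (-((((ℓ+1) % d : ℕ)):ℤ)) * ε)
          * Tf a V f (X * Qg) z := by
      funext z
      rw [sigmaMap_of_hasWeight ε (X*g) hm hgX z, hrhoE, Tf]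
      simp only [map_mul, Polynomial.eval_mul, Polynomial.eval_X, hQg z]
      ring
    rw [hL, hR, MeasureTheory.integral_const_mul, MeasureTheory.integral_const_mul]
    rw [key_integration ha V f Qg]
    set S := ∫ z : ℂ, Tf a V f (X * Qg) z with hS
    rw [hτ ℓ]
    rw [show ((if ℓ % d = d - 1 then (-1:ℝ)^(d-1) else 1 : ℝ) : ℂ)
        = (if ℓ % d = d - 1 then (-1:ℂ)^(d-1) else 1) from by split <;> push_cast <;> ring]
    have hsc := congrArg (starRingEnd ℂ) (scalar_id hd hε hℓ)
    have hite : (starRingEnd ℂ) (if ℓ % d = d - 1 then (-1:ℂ)^(d-1) else 1)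
        = (if ℓ % d = d - 1 then (-1:ℂ)^(d-1) else 1) := by split <;> simp
    rw [map_neg, map_mul, hite] at hsc
    linear_combination ((a:ℂ) * S) * hsc
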